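/- Let Σ be a finite set, P a probability mass function on Σⁿ with P(x) > 0 for all x, and T a tree on vertex set {1,…,n} with a fixed root r and parent map pa. Define the T-structured distribution P_T by P_T(x) := P_r(x_r)·∏_{v≠r} P_{(pa(v),v)}(x_{pa(v)}, x_v)/P_{pa(v)}(x_{pa(v)}). Then D(P‖P_T) = (Σ_{v=1}^{n} H(P_v) − H(P)) − Σ_{\{u,v\} ∈ E(T)} I(X_u; X_v), where E(T) is the edge set of T. -/

import Mathlib

open scoped Classical

noncomputable section

/-- Marginal of a pmf on `Σⁿ` at coordinate `v`. -/
def marg {n : ℕ} {α : Type*} [Fintype α] (P : (Fin n → α) → ℝ) (v : Fin n) (a : α) : ℝ :=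
  ∑ x : Fin n → α, if x v = a then P x else 0

/-- Marginal of a pmf on `Σⁿ` at the pair of coordinates `(u, v)`. -/
def marg2 {n : ℕ} {α : Type*} [Fintype α] (P : (Fin n → α) → ℝ) (u v : Fin n)
    (a b : α) : ℝ :=
  ∑ x : Fin n → α, if x u = a ∧ x v = b then P x else 0

/-- KL divergence `D(P‖Q)`; terms with `P x = 0` vanish automatically. -/
def KL {β : Type*} [Fintype β] (P Q : β → ℝ) : ℝ :=
  ∑ x, P x * Real.log (P x / Q x)

/-- Shannon entropy; terms with `P x = 0` vanish automatically. -/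
def ent {β : Type*} [Fintype β] (P : β → ℝ) : ℝ :=
  -∑ x, P x * Real.log (P x)

/-- Pairwise mutual information `I(X_u; X_v)` of coordinates `u, v` under `P`. -/
def miC {n : ℕ} {α : Type*} [Fintype α] (P : (Fin n → α) → ℝ) (u v : Fin n) : ℝ :=
  ∑ a, ∑ b, marg2 P u v a b *
    Real.log (marg2 P u v a b / (marg P u a * marg P v b))

section Aux

variable {n : ℕ} {α : Type*} [Fintype α]

lemma marg_group' (P : (Fin n → α) → ℝ) (v : Fin n) (g : α → ℝ) :
    ∑ a, marg P v a * g a = ∑ x, P x * g (x v) := by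
  unfold marg
  simp_rw [Finset.sum_mul, ite_mul, zero_mul]
  rw [Finset.sum_comm]
  refine Finset.sum_congr rfl fun x _ => ?_
  simp

lemma marg2_group' (P : (Fin n → α) → ℝ) (u v : Fin n) (g : α → α → ℝ) :
    ∑ a, ∑ b, marg2 P u v a b * g a b = ∑ x, P x * g (x u) (x v) := by
  have h : ∀ x : Fin n → α, P x * g (x u) (x v)
      = ∑ a, ∑ b, if x u = a ∧ x v = b then P x * g a b else 0 := by
    intro x
    simp [ite_and]
  calc ∑ a, ∑ b, marg2 P u v a b * g a b
      = ∑ a, ∑ b, ∑ x : Fin n → α, if x u = a ∧ x v = b then P x * g a b else 0 := by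
        simp [marg2, Finset.sum_mul, ite_mul, zero_mul]
    _ = ∑ a, ∑ x : Fin n → α, ∑ b, (if x u = a ∧ x v = b then P x * g a b else 0) :=
        Finset.sum_congr rfl fun a _ => Finset.sum_comm
    _ = ∑ x : Fin n → α, ∑ a, ∑ b, (if x u = a ∧ x v = b then P x * g a b else 0) :=
        Finset.sum_comm
    _ = ∑ x, P x * g (x u) (x v) := Finset.sum_congr rfl fun x _ => (h x).symm

lemma marg_pos' [Nonempty α] (P : (Fin n → α) → ℝ) (hP : ∀ x, 0 < P x) (v : Fin n) (a : α) :
    0 < marg P v a := by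
  refine Finset.sum_pos' (fun x _ => by split <;> simp [(hP x).le])
    ⟨fun _ => a, Finset.mem_univ _, ?_⟩
  simp [(hP _).le, hP]

lemma marg2_pos' (P : (Fin n → α) → ℝ) (hP : ∀ x, 0 < P x) {u v : Fin n} (huv : u ≠ v)
    (a b : α) : 0 < marg2 P u v a b := by
  refine Finset.sum_pos' (fun x _ => by split <;> simp [(hP x).le])
    ⟨Function.update (fun _ => a) v b, Finset.mem_univ _, ?_⟩
  simp [Function.update_of_ne huv, hP]

lemma marg2_sum_right' (P : (Fin n → α) → ℝ) (u v : Fin n) (a : α) :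
    ∑ b, marg2 P u v a b = marg P u a := by
  unfold marg2 marg
  rw [Finset.sum_comm]
  refine Finset.sum_congr rfl fun x _ => ?_
  simp [ite_and]

lemma marg2_sum_left' (P : (Fin n → α) → ℝ) (u v : Fin n) (b : α) :
    ∑ a, marg2 P u v a b = marg P v b := by
  unfold marg2 marg
  rw [Finset.sum_comm]
  refine Finset.sum_congr rfl fun x _ => ?_
  simp [ite_and]

lemma marg2_symm' (P : (Fin n → α) → ℝ) (u v : Fin n) (a b : α) :
    marg2 P u v a b = marg2 P v u b a := by
  unfold marg2
  exact Finset.sum_congr rfl fun x _ => if_congr and_comm rfl rfl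

lemma miC_symm' (P : (Fin n → α) → ℝ) (u v : Fin n) : miC P u v = miC P v u := by
  unfold miC
  rw [Finset.sum_comm]
  refine Finset.sum_congr rfl fun b _ => Finset.sum_congr rfl fun a _ => ?_
  rw [marg2_symm' P u v a b, mul_comm (marg P u a) (marg P v b)]

lemma miC_eq' [Nonempty α] (P : (Fin n → α) → ℝ) (hP : ∀ x, 0 < P x) {u v : Fin n}
    (huv : u ≠ v) :
    miC P u v = ent (fun a => marg P u a) + ent (fun b => marg P v b)
      + ∑ a, ∑ b, marg2 P u v a b * Real.log (marg2 P u v a b) := by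
  have h1 : ∀ a b : α, marg2 P u v a b *
      Real.log (marg2 P u v a b / (marg P u a * marg P v b))
      = marg2 P u v a b * Real.log (marg2 P u v a b)
        - marg2 P u v a b * Real.log (marg P u a)
        - marg2 P u v a b * Real.log (marg P v b) := by
    intro a b
    rw [Real.log_div (marg2_pos' P hP huv a b).ne'
        (mul_pos (marg_pos' P hP u a) (marg_pos' P hP v b)).ne',
      Real.log_mul (marg_pos' P hP u a).ne' (marg_pos' P hP v b).ne']
    ring
  have h2 : ∀ a : α, ∑ b, marg2 P u v a b * Real.log (marg P u a)
      = marg P u a * Real.log (marg P u a) := by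
    intro a
    rw [← Finset.sum_mul, marg2_sum_right']
  have h3 : ∑ a, ∑ b, marg2 P u v a b * Real.log (marg P v b)
      = ∑ b, marg P v b * Real.log (marg P v b) := by
    rw [Finset.sum_comm]
    refine Finset.sum_congr rfl fun b _ => ?_
    rw [← Finset.sum_mul, marg2_sum_left']
  unfold miC
  simp_rw [h1, Finset.sum_sub_distrib, h2]
  rw [h3]
  unfold ent
  ring

lemma graph_sum' (T : SimpleGraph (Fin n)) (hT : T.IsTree) (r : Fin n)
    (pa : Fin n → Fin n)
    (hE : T.edgeSet = {e | ∃ v, v ≠ r ∧ e = s(pa v, v)})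
    (f : Fin n → Fin n → ℝ) (hf : ∀ u v, f u v = f v u) :
    ∑ u, ∑ v, (if T.Adj u v then f u v else 0)
      = 2 * ∑ v ∈ Finset.univ.filter (fun v => v ≠ r), f (pa v) v := by
  classical
  set F := Finset.univ.filter (fun v : Fin n => v ≠ r) with hF
  have hmemF : ∀ v, v ∈ F ↔ v ≠ r := by intro v; simp [hF]
  have hadj : ∀ v, v ≠ r → T.Adj (pa v) v := fun v hv =>
    T.mem_edgeSet.mp (by rw [hE]; exact ⟨v, hv, rfl⟩)
  have hcardF : F.card + 1 = n := by
    have h1 : F = Finset.univ.erase r := by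
      ext v; simp [hF, Finset.mem_erase]
    have hn : 0 < n := r.pos
    rw [h1, Finset.card_erase_of_mem (Finset.mem_univ r), Finset.card_univ,
      Fintype.card_fin]
    omega
  have hcardE : T.edgeFinset.card + 1 = n := by
    have := hT.card_edgeFinset
    simpa using this
  have hmaps : ∀ v ∈ F, s(pa v, v) ∈ T.edgeFinset := fun v hv =>
    SimpleGraph.mem_edgeFinset.mpr (by rw [hE]; exact ⟨v, (hmemF v).mp hv, rfl⟩)
  have hsurj : ∀ e ∈ T.edgeFinset, ∃ v, ∃ _ : v ∈ F, s(pa v, v) = e := by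
    intro e he
    have h : e ∈ T.edgeSet := SimpleGraph.mem_edgeFinset.mp he
    rw [hE] at h
    obtain ⟨v, hv, hev⟩ := h
    exact ⟨v, (hmemF v).mpr hv, hev.symm⟩
  have hinj : ∀ v₁ (h₁ : v₁ ∈ F) v₂ (h₂ : v₂ ∈ F),
      s(pa v₁, v₁) = s(pa v₂, v₂) → v₁ = v₂ := by
    have := Finset.inj_on_of_surj_on_of_card_le
      (s := F) (t := T.edgeFinset) (fun v _ => s(pa v, v)) hmaps
      (fun e he => hsurj e he) (by omega)
    intro v₁ h₁ v₂ h₂ h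
    exact this h₁ h₂ h
  set D := (Finset.univ ×ˢ Finset.univ).filter
    (fun p : Fin n × Fin n => T.Adj p.1 p.2) with hD
  have step1 : ∑ u, ∑ v, (if T.Adj u v then f u v else 0)
      = ∑ p ∈ D, f p.1 p.2 := by
    rw [← Finset.sum_product']
    rw [hD, Finset.sum_filter]
  have hDeq : D = F.image (fun v => ((pa v, v) : Fin n × Fin n))
      ∪ F.image (fun v => ((v, pa v) : Fin n × Fin n)) := by
    ext p
    simp only [Finset.mem_union, Finset.mem_image, hD, Finset.mem_filter,
      Finset.mem_product, Finset.mem_univ, true_and, and_true]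
    constructor
    · intro hp
      have hpe : s(p.1, p.2) ∈ T.edgeSet := T.mem_edgeSet.mpr hp
      rw [hE] at hpe
      obtain ⟨v, hv, hev⟩ := hpe
      rw [Sym2.eq_iff] at hev
      rcases hev with ⟨h1, h2⟩ | ⟨h1, h2⟩
      · exact Or.inl ⟨v, (hmemF v).mpr hv, by rw [Prod.ext_iff]; exact ⟨h1.symm, h2.symm⟩⟩
      · exact Or.inr ⟨v, (hmemF v).mpr hv, by rw [Prod.ext_iff]; exact ⟨h1.symm, h2.symm⟩⟩
    · rintro (⟨v, hv, rfl⟩ | ⟨v, hv, rfl⟩)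
      · exact hadj v ((hmemF v).mp hv)
      · exact (hadj v ((hmemF v).mp hv)).symm
  have hdisj : Disjoint (F.image (fun v => ((pa v, v) : Fin n × Fin n)))
      (F.image (fun v => ((v, pa v) : Fin n × Fin n))) := by
    rw [Finset.disjoint_left]
    intro p hp1 hp2
    rw [Finset.mem_image] at hp1 hp2
    obtain ⟨v₁, h₁, e₁⟩ := hp1
    obtain ⟨v₂, h₂, e₂⟩ := hp2
    have h : pa v₁ = v₂ ∧ v₁ = pa v₂ := by
      have h' := e₁.trans e₂.symm
      rw [Prod.ext_iff] at h'
      exact h'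
    have hv₁ : v₁ ≠ r := (hmemF v₁).mp h₁
    have heq : s(pa v₁, v₁) = s(pa v₂, v₂) := by
      rw [h.1, h.2, Sym2.eq_swap]
    have hvv := hinj v₁ h₁ v₂ h₂ heq
    subst hvv
    exact (hadj v₁ hv₁).ne h.1
  have hinj1 : ∀ x ∈ F, ∀ y ∈ F,
      ((pa x, x) : Fin n × Fin n) = (pa y, y) → x = y := by
    intro x _ y _ h
    rw [Prod.ext_iff] at h
    exact h.2
  have hinj2 : ∀ x ∈ F, ∀ y ∈ F,
      ((x, pa x) : Fin n × Fin n) = (y, pa y) → x = y := by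
    intro x _ y _ h
    rw [Prod.ext_iff] at h
    exact h.1
  rw [step1, hDeq, Finset.sum_union hdisj, Finset.sum_image hinj1,
    Finset.sum_image hinj2]
  have hswap : ∑ v ∈ F, f v (pa v) = ∑ v ∈ F, f (pa v) v :=
    Finset.sum_congr rfl fun v _ => hf v (pa v)
  simp only
  rw [hswap]
  ring

end Aux

/-- The Chow–Liu identity: `D(P‖P_T) = (Σ_v H(P_v) − H(P)) − Σ_{{u,v}∈E(T)} I(X_u;X_v)`.
The sum over undirected edges of `T` is written as half the sum over ordered
adjacent pairs (each edge contributes its mutual information once, since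
`I(X_u;X_v) = I(X_v;X_u)`). -/
theorem stmt7 {n : ℕ} {α : Type*} [Fintype α]
    (T : SimpleGraph (Fin n)) (hT : T.IsTree) (r : Fin n) (pa : Fin n → Fin n)
    (hE : T.edgeSet = {e | ∃ v, v ≠ r ∧ e = s(pa v, v)})
    (P : (Fin n → α) → ℝ) (hPpos : ∀ x, 0 < P x) (hP1 : ∑ x, P x = 1) :
    KL P (fun x => marg P r (x r) *
        ∏ v ∈ Finset.univ.filter (fun v => v ≠ r),
          marg2 P (pa v) v (x (pa v)) (x v) / marg P (pa v) (x (pa v))) =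
      ((∑ v, ent (fun a => marg P v a)) - ent P)
        - (1 / 2) * ∑ u : Fin n, ∑ v : Fin n,
            (if T.Adj u v then miC P u v else 0) := by
  have hα : Nonempty α := by
    by_contra h
    rw [not_nonempty_iff] at h
    have he : IsEmpty (Fin n → α) := ⟨fun x => (h.false (x r))⟩
    rw [@Finset.univ_eq_empty _ _ he, Finset.sum_empty] at hP1
    exact one_ne_zero hP1.symm
  classical
  set F := Finset.univ.filter (fun v : Fin n => v ≠ r) with hF
  have hmemF : ∀ v, v ∈ F ↔ v ≠ r := by intro v; simp [hF]
  have hadj : ∀ v, v ≠ r → T.Adj (pa v) v := fun v hv =>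
    T.mem_edgeSet.mp (by rw [hE]; exact ⟨v, hv, rfl⟩)
  have hpa : ∀ v, v ≠ r → pa v ≠ v := fun v hv => (hadj v hv).ne
  set Q : (Fin n → α) → ℝ := fun x => marg P r (x r) *
      ∏ v ∈ F, marg2 P (pa v) v (x (pa v)) (x v) / marg P (pa v) (x (pa v)) with hQ
  have hQpos : ∀ x, 0 < Q x := by
    intro x
    refine mul_pos (marg_pos' P hPpos r _) (Finset.prod_pos ?_)
    intro v hv
    exact div_pos (marg2_pos' P hPpos (hpa v ((hmemF v).mp hv)) _ _)
      (marg_pos' P hPpos _ _)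
  set E1 : Fin n → ℝ := fun w => ent (fun a => marg P w a) with hE1
  set J : Fin n → Fin n → ℝ :=
    fun u v => ∑ a, ∑ b, marg2 P u v a b * Real.log (marg2 P u v a b) with hJ
  -- Step 1
  have hKL : KL P Q = -ent P - ∑ x, P x * Real.log (Q x) := by
    unfold KL ent
    simp_rw [Real.log_div (hPpos _).ne' (hQpos _).ne', mul_sub]
    rw [Finset.sum_sub_distrib]
    ring
  -- Step 2
  have hlogQ : ∀ x, Real.log (Q x) = Real.log (marg P r (x r))
      + ∑ v ∈ F, (Real.log (marg2 P (pa v) v (x (pa v)) (x v))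
          - Real.log (marg P (pa v) (x (pa v)))) := by
    intro x
    rw [hQ]
    have hprodpos : ∀ v ∈ F,
        (0:ℝ) < marg2 P (pa v) v (x (pa v)) (x v) / marg P (pa v) (x (pa v)) :=
      fun v hv => div_pos (marg2_pos' P hPpos (hpa v ((hmemF v).mp hv)) _ _)
        (marg_pos' P hPpos _ _)
    rw [Real.log_mul (marg_pos' P hPpos r _).ne' (Finset.prod_pos hprodpos).ne',
      Real.log_prod (fun v hv => (hprodpos v hv).ne')]
    congr 1
    refine Finset.sum_congr rfl fun v hv => ?_
    exact Real.log_div (marg2_pos' P hPpos (hpa v ((hmemF v).mp hv)) _ _).ne'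
      (marg_pos' P hPpos _ _).ne'
  -- Step 3
  have hsum : ∑ x, P x * Real.log (Q x)
      = (∑ x, P x * Real.log (marg P r (x r)))
        + ∑ v ∈ F, ((∑ x, P x * Real.log (marg2 P (pa v) v (x (pa v)) (x v)))
            - ∑ x, P x * Real.log (marg P (pa v) (x (pa v)))) := by
    simp_rw [hlogQ, mul_add, Finset.mul_sum, mul_sub]
    rw [Finset.sum_add_distrib]
    congr 1
    rw [Finset.sum_comm]
    exact Finset.sum_congr rfl fun v _ => Finset.sum_sub_distrib _ _
  -- Step 4: group the sums through the marginals
  have g1 : ∑ x, P x * Real.log (marg P r (x r)) = -E1 r := by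
    rw [← marg_group' P r (fun a => Real.log (marg P r a)), hE1]
    unfold ent
    ring
  have g2 : ∀ w : Fin n, ∑ x, P x * Real.log (marg P w (x w)) = -E1 w := by
    intro w
    rw [← marg_group' P w (fun a => Real.log (marg P w a)), hE1]
    unfold ent
    ring
  have g3 : ∀ u v : Fin n,
      ∑ x, P x * Real.log (marg2 P u v (x u) (x v)) = J u v := by
    intro u v
    rw [← marg2_group' P u v (fun a b => Real.log (marg2 P u v a b)), hJ]
  have hS : ∑ x, P x * Real.log (Q x)
      = -E1 r + ∑ v ∈ F, (miC P (pa v) v - E1 v) := by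
    rw [hsum, g1]
    congr 1
    refine Finset.sum_congr rfl fun v hv => ?_
    rw [g3, g2]
    have := miC_eq' P hPpos (hpa v ((hmemF v).mp hv))
    rw [hE1, hJ]
    simp only at this ⊢
    rw [this]
    ring
  -- Step 5: split the entropy sum and use the graph bijection
  have hsplit : ∑ v, E1 v = E1 r + ∑ v ∈ F, E1 v := by
    have h1 : Finset.univ.filter (fun v : Fin n => ¬ v ≠ r) = {r} := by
      ext v; simp
    rw [← Finset.sum_filter_add_sum_filter_not Finset.univ (fun v => v ≠ r) E1,
      h1, Finset.sum_singleton, add_comm, ← hF]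
  have hgraph : ∑ u : Fin n, ∑ v : Fin n, (if T.Adj u v then miC P u v else 0)
      = 2 * ∑ v ∈ F, miC P (pa v) v := by
    rw [graph_sum' T hT r pa hE (miC P) (miC_symm' P), hF]
  have hsub : ∑ v ∈ F, (miC P (pa v) v - E1 v)
      = ∑ v ∈ F, miC P (pa v) v - ∑ v ∈ F, E1 v := Finset.sum_sub_distrib _ _
  rw [hKL, hS, hsub]
  rw [show (∑ v, ent (fun a => marg P v a)) = ∑ v, E1 v from rfl, hsplit, hgraph]
  ring

end
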